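/- (Hijikata, case n = 2.) Let O be a discrete valuation ring with maximal ideal p and fraction field k, and let S be an O-order in M_2(k) containing the diagonal subring diag(O,O). Then there exist integers a, b with a + b ≥ 0 such that S = {A ∈ M_2(k) : A_{11}, A_{22} ∈ O, A_{12} ∈ p^a, A_{21} ∈ p^b}; moreover such a set is an order if and only if a + b ≥ 0, and is conjugate by a diagonal matrix to the order with entries (O, O; p^{a+b}, O). -/

import Mathlib

noncomputable section

/-- The fractional ideal `p^ν = π^ν O` inside `k`. -/
def pset (O : Type*) [CommRing O] {k : Type*} [Field k] [Algebra O k] (π : k) (ν : ℤ) :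
    Set k := {x : k | ∃ c : O, x = algebraMap O k c * π ^ ν}

/-- An `O`-order in `M_n(k)`: a subalgebra which is finitely generated as an `O`-module
and is a full lattice (every matrix has a nonzero `O`-multiple in it). -/
def IsOrder (O : Type*) [CommRing O] {k : Type*} [Field k] [Algebra O k] {n : ℕ}
    (S : Subalgebra O (Matrix (Fin n) (Fin n) k)) : Prop :=
  (Subalgebra.toSubmodule S).FG ∧
    ∀ A : Matrix (Fin n) (Fin n) k, ∃ c : O, c ≠ 0 ∧ algebraMap O k c • A ∈ S

/-- A subset of `M_n(k)` is an `O`-order if it is the underlying set of an order. -/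
def IsOrderSet (O : Type*) [CommRing O] {k : Type*} [Field k] [Algebra O k] {n : ℕ}
    (s : Set (Matrix (Fin n) (Fin n) k)) : Prop :=
  ∃ S : Subalgebra O (Matrix (Fin n) (Fin n) k),
    (S : Set (Matrix (Fin n) (Fin n) k)) = s ∧ IsOrder O S

/-- The maximal order `Λ(m₁,…,m_n) = {A : A_{ij} ∈ p^{m_i - m_j}}`. -/
def Lam (O : Type*) [CommRing O] {k : Type*} [Field k] [Algebra O k] {n : ℕ} (π : k)
    (m : Fin n → ℤ) : Set (Matrix (Fin n) (Fin n) k) :=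
  {A | ∀ i j, A i j ∈ pset O π (m i - m j)}

/-- A maximal `O`-order. -/
def IsMaximalOrder (O : Type*) [CommRing O] {k : Type*} [Field k] [Algebra O k] {n : ℕ}
    (S : Subalgebra O (Matrix (Fin n) (Fin n) k)) : Prop :=
  IsOrder O S ∧ ∀ T : Subalgebra O (Matrix (Fin n) (Fin n) k), IsOrder O T → S ≤ T → T = S

/-- `m` is an integer point of the convex polytope `C(ν)` (in the hyperplane `x₁ = 0`). -/
def IntPt {n : ℕ} [NeZero n] (ν : Matrix (Fin n) (Fin n) ℤ) (m : Fin n → ℤ) : Prop :=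
  m 0 = 0 ∧ ∀ i j, -ν j i ≤ m i - m j ∧ m i - m j ≤ ν i j

/-- `ν` is reduced: `C(ν)` contains an integer point and every bounding hyperplane
`x_i - x_j = ν_{ij}` contains an integer point of `C(ν)`. -/
def Reduced {n : ℕ} [NeZero n] (ν : Matrix (Fin n) (Fin n) ℤ) : Prop :=
  (∃ m, IntPt ν m) ∧ ∀ i j, ∃ m, IntPt ν m ∧ m i - m j = ν i j


set_option linter.unusedSectionVars false

section Helpers

variable {O : Type*} [CommRing O] [IsDomain O] [IsDiscreteValuationRing O]
  {k : Type*} [Field k] [Algebra O k] [IsFractionRing O k]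
  {ϖ : O} {π : k}

lemma pi_ne_zero (hϖ : Irreducible ϖ) (hπ : π = algebraMap O k ϖ) : π ≠ 0 := by
  subst hπ
  exact (map_ne_zero_iff _ (IsFractionRing.injective O k)).2 hϖ.ne_zero

lemma pset_eq_span (ν : ℤ) :
    pset O π ν = (Submodule.span O {π ^ ν} : Submodule O k) := by
  ext x
  simp [pset, Submodule.mem_span_singleton, Algebra.smul_def, eq_comm]

lemma zero_mem_pset (ν : ℤ) : (0 : k) ∈ pset O π ν := ⟨0, by simp⟩

lemma zpow_mem_pset (ν : ℤ) : π ^ ν ∈ pset O π ν := ⟨1, by simp⟩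

lemma add_mem_pset {x y : k} {ν : ℤ} (hx : x ∈ pset O π ν) (hy : y ∈ pset O π ν) :
    x + y ∈ pset O π ν := by
  obtain ⟨c, rfl⟩ := hx; obtain ⟨d, rfl⟩ := hy
  exact ⟨c + d, by rw [map_add]; ring⟩

lemma smul_mem_pset {x : k} {ν : ℤ} (c : O) (hx : x ∈ pset O π ν) :
    algebraMap O k c * x ∈ pset O π ν := by
  obtain ⟨d, rfl⟩ := hx
  exact ⟨c * d, by rw [map_mul]; ring⟩

lemma mul_mem_pset (hϖ : Irreducible ϖ) (hπ : π = algebraMap O k ϖ)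
    {x y : k} {ν μ : ℤ} (hx : x ∈ pset O π ν) (hy : y ∈ pset O π μ) :
    x * y ∈ pset O π (ν + μ) := by
  obtain ⟨c, rfl⟩ := hx; obtain ⟨d, rfl⟩ := hy
  exact ⟨c * d, by rw [map_mul, zpow_add₀ (pi_ne_zero hϖ hπ)]; ring⟩

lemma zpow_int_add (hϖ : Irreducible ϖ) (hπ : π = algebraMap O k ϖ)
    (ν μ : ℤ) : π ^ (ν + μ) = π ^ ν * π ^ μ :=
  zpow_add₀ (pi_ne_zero hϖ hπ) ν μ

lemma zpow_toNat (hπ : π = algebraMap O k ϖ) {ν : ℤ} (h : 0 ≤ ν) :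
    π ^ ν = algebraMap O k (ϖ ^ ν.toNat) := by
  rw [map_pow, ← hπ, ← zpow_natCast]
  congr 1
  omega

lemma pset_mono (hϖ : Irreducible ϖ) (hπ : π = algebraMap O k ϖ)
    {μ ν : ℤ} (h : μ ≤ ν) : pset O π ν ⊆ pset O π μ := by
  rintro x ⟨c, rfl⟩
  refine ⟨c * ϖ ^ (ν - μ).toNat, ?_⟩
  rw [map_mul, ← zpow_toNat hπ (by omega), mul_assoc, ← zpow_int_add hϖ hπ]
  congr 2
  omega

lemma zpow_mem_pset_iff (hϖ : Irreducible ϖ) (hπ : π = algebraMap O k ϖ)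
    {μ ν : ℤ} : π ^ μ ∈ pset O π ν ↔ ν ≤ μ := by
  have hne := pi_ne_zero hϖ hπ
  constructor
  · rintro ⟨c, hc⟩
    by_contra h
    push_neg at h
    have h2 : algebraMap O k c * π ^ (ν - μ) = 1 := by
      have e1 : π ^ (ν - μ) = π ^ ν * π ^ (-μ) := by
        rw [← zpow_add₀ hne, sub_eq_add_neg]
      rw [e1, ← mul_assoc, ← hc, ← zpow_add₀ hne, add_neg_cancel, zpow_zero]
    have hnn : (0:ℤ) ≤ ν - μ := by omega
    have h3 : c * ϖ ^ (ν - μ).toNat = 1 := by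
      apply IsFractionRing.injective O k
      rw [map_mul, map_one, ← zpow_toNat hπ hnn]
      exact h2
    obtain ⟨s, hs⟩ : ∃ s, (ν - μ).toNat = s + 1 := ⟨(ν - μ).toNat - 1, by omega⟩
    rw [hs] at h3
    exact hϖ.not_isUnit (IsUnit.of_mul_eq_one (a := ϖ) (ϖ ^ s * c) (by rw [← h3]; ring))
  · intro h
    exact pset_mono hϖ hπ h (zpow_mem_pset μ)

lemma exists_rep (hϖ : Irreducible ϖ) (hπ : π = algebraMap O k ϖ)
    {x : k} (hx : x ≠ 0) :
    ∃ (v : ℤ) (u : O), IsUnit u ∧ x = algebraMap O k u * π ^ v := by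
  obtain ⟨a, b, hb, rfl⟩ := IsFractionRing.div_surjective (A := O) x
  have hbk : algebraMap O k b ≠ 0 :=
    IsFractionRing.to_map_ne_zero_of_mem_nonZeroDivisors hb
  have hb0 : b ≠ 0 := fun h => hbk (by rw [h, map_zero])
  have ha0 : a ≠ 0 := by
    rintro rfl; simp at hx
  obtain ⟨m, u, hu⟩ := IsDiscreteValuationRing.eq_unit_mul_pow_irreducible ha0 hϖ
  obtain ⟨n, w, hw⟩ := IsDiscreteValuationRing.eq_unit_mul_pow_irreducible hb0 hϖ
  refine ⟨(m : ℤ) - n, (u : O) * ((w⁻¹ : Oˣ) : O), (u * w⁻¹).isUnit, ?_⟩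
  have hne := pi_ne_zero hϖ hπ
  have hwk : algebraMap O k ((w : O)) ≠ 0 :=
    (map_ne_zero_iff _ (IsFractionRing.injective O k)).2 (Units.ne_zero w)
  have hwinv : algebraMap O k ((w⁻¹ : Oˣ) : O) = (algebraMap O k (w : O))⁻¹ := by
    have h1 : algebraMap O k ((w⁻¹ : Oˣ) : O) * algebraMap O k (w : O) = 1 := by
      rw [← map_mul]; simp
    exact eq_inv_of_mul_eq_one_left h1
  have key : π ^ ((m:ℤ) - n) = π ^ (m:ℕ) / π ^ (n:ℕ) := by
    rw [zpow_sub₀ hne, zpow_natCast, zpow_natCast]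
  rw [hu, hw, map_mul, map_mul, map_pow, map_pow, ← hπ, map_mul, hwinv, key]
  have hpm : π ^ (n:ℕ) ≠ 0 := pow_ne_zero _ hne
  field_simp

lemma unit_zpow_mem_pset_iff (hϖ : Irreducible ϖ) (hπ : π = algebraMap O k ϖ)
    {u : O} (hu : IsUnit u) {v ν : ℤ} :
    algebraMap O k u * π ^ v ∈ pset O π ν ↔ ν ≤ v := by
  rw [← zpow_mem_pset_iff hϖ hπ (μ := v) (ν := ν)]
  obtain ⟨u', rfl⟩ := hu
  constructor
  · rintro ⟨c, hc⟩
    refine ⟨((u'⁻¹ : Oˣ) : O) * c, ?_⟩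
    rw [map_mul, mul_assoc, ← hc, ← mul_assoc, ← map_mul]
    simp
  · rintro ⟨c, hc⟩
    exact ⟨(u' : O) * c, by rw [hc, map_mul]; ring⟩

lemma fg_submodule_eq_pset (hϖ : Irreducible ϖ) (hπ : π = algebraMap O k ϖ)
    {M : Submodule O k} (hfg : M.FG) (hne : M ≠ ⊥) :
    ∃ ν : ℤ, (M : Set k) = pset O π ν := by
  classical
  obtain ⟨s, hs⟩ := hfg
  set t := s.filter (fun x => x ≠ 0) with ht
  have hspan : Submodule.span O (t : Set k) = M := by
    rw [← hs]
    apply le_antisymm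
    · apply Submodule.span_mono
      intro x hx
      simp only [ht, Finset.coe_filter, Set.mem_setOf_eq] at hx
      exact hx.1
    · rw [Submodule.span_le]
      intro x hx
      by_cases hx0 : x = 0
      · simp [hx0]
      · apply Submodule.subset_span
        simp only [ht, Finset.coe_filter, Set.mem_setOf_eq]
        exact ⟨hx, hx0⟩
  have htne : t.Nonempty := by
    by_contra hempty
    rw [Finset.not_nonempty_iff_eq_empty] at hempty
    rw [hempty] at hspan
    simp at hspan
    exact hne hspan.symm
  -- valuation function via choice
  have hval : ∀ x ∈ t, ∃ v : ℤ, ∃ u : O, IsUnit u ∧ x = algebraMap O k u * π ^ v := by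
    intro x hx
    have hx0 : x ≠ 0 := by simp [ht, Finset.mem_filter] at hx; exact hx.2
    exact exists_rep hϖ hπ hx0
  choose! v u hu hrep using hval
  obtain ⟨x₀, hx₀, hmin⟩ := t.exists_min_image v htne
  refine ⟨v x₀, ?_⟩
  apply Set.Subset.antisymm
  · intro x hxM
    have hx : x ∈ Submodule.span O (t : Set k) := by rw [hspan]; exact hxM
    rw [pset_eq_span (O := O) (π := π) (v x₀), SetLike.mem_coe]
    revert hx
    refine fun hx => Submodule.span_le.2 ?_ hx
    intro y hy
    rw [Finset.mem_coe] at hy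
    rw [SetLike.mem_coe, ← SetLike.mem_coe, ← pset_eq_span]
    rw [hrep y hy]
    exact (unit_zpow_mem_pset_iff hϖ hπ (hu y hy)).2 (hmin y hy)
  · rw [pset_eq_span]
    intro x hx
    rw [SetLike.mem_coe, Submodule.mem_span_singleton] at hx
    obtain ⟨c, rfl⟩ := hx
    apply M.smul_mem
    have hπν : π ^ (v x₀) ∈ M := by
      have hx₀M : x₀ ∈ M := by
        rw [← hspan]; exact Submodule.subset_span (Finset.mem_coe.2 hx₀)
      obtain ⟨u', hu'⟩ := hu x₀ hx₀
      have heq : ((u'⁻¹ : Oˣ) : O) • x₀ = π ^ (v x₀) := by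
        conv_lhs => rw [hrep x₀ hx₀]
        rw [Algebra.smul_def, ← mul_assoc, ← map_mul, ← hu']
        simp
      rw [← heq]
      exact M.smul_mem _ hx₀M
    exact hπν

end Helpers

section MatrixHelpers
variable {k : Type*} [Field k]

lemma corner_eq (A : Matrix (Fin 2) (Fin 2) k) (i j : Fin 2) :
    Matrix.single i i (1:k) * A * Matrix.single j j 1
      = A i j • Matrix.single i j 1 := by
  ext a b
  by_cases hb : b = j
  · subst hb
    rw [Matrix.mul_single_apply_same]
    by_cases ha : a = i
    · subst ha; simp
    · rw [Matrix.single_mul_apply_of_ne (h := ha)]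
      simp [Ne.symm ha]
  · rw [Matrix.mul_single_apply_of_ne (hbj := hb)]
    simp [Ne.symm hb]

lemma matrix_decomp (A : Matrix (Fin 2) (Fin 2) k) :
    A = A 0 0 • Matrix.single 0 0 (1:k) + A 0 1 • Matrix.single 0 1 1
      + A 1 0 • Matrix.single 1 0 1 + A 1 1 • Matrix.single 1 1 1 := by
  conv_lhs => rw [Matrix.matrix_eq_sum_single A]
  simp only [Fin.sum_univ_two, Matrix.smul_single, smul_eq_mul, mul_one]
  abel

lemma smul_std_mul (x y : k) (i j l : Fin 2) :
    (x • Matrix.single i j (1:k)) * (y • Matrix.single j l 1)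
      = (x * y) • Matrix.single i l 1 := by
  rw [smul_mul_smul_comm, Matrix.single_mul_single_same, mul_one]

end MatrixHelpers

section Parts
variable {O : Type*} [CommRing O] [IsDomain O] [IsDiscreteValuationRing O]
  {k : Type*} [Field k] [Algebra O k] [IsFractionRing O k]
  {ϖ : O} {π : k}


lemma exists_scale (hϖ : Irreducible ϖ) (hπ : π = algebraMap O k ϖ) (x : k) (ν : ℤ) :
    ∃ n : ℕ, ∀ m : ℕ, n ≤ m → algebraMap O k (ϖ ^ m) * x ∈ pset O π ν := by
  by_cases hx : x = 0
  · exact ⟨0, fun m _ => by rw [hx, mul_zero]; exact zero_mem_pset ν⟩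
  · obtain ⟨v, u, hu, hrep⟩ := exists_rep hϖ hπ hx
    refine ⟨(ν - v).toNat, fun m hm => ?_⟩
    rw [hrep, ← mul_assoc, mul_comm (algebraMap O k (ϖ ^ m)) (algebraMap O k u), mul_assoc]
    have hm2 : algebraMap O k (ϖ ^ m) * π ^ v = π ^ ((m : ℤ) + v) := by
      rw [map_pow, ← hπ, ← zpow_natCast π m, ← zpow_add₀ (pi_ne_zero hϖ hπ)]
    rw [hm2]
    exact (unit_zpow_mem_pset_iff hϖ hπ hu).2 (by omega)

lemma part2 (hϖ : Irreducible ϖ) (hπ : π = algebraMap O k ϖ) (a b : ℤ) :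
    IsOrderSet O {A : Matrix (Fin 2) (Fin 2) k |
        A 0 0 ∈ pset O π 0 ∧ A 0 1 ∈ pset O π a ∧
        A 1 0 ∈ pset O π b ∧ A 1 1 ∈ pset O π 0} ↔ a + b ≥ 0 := by
  have hne := pi_ne_zero hϖ hπ
  set E00 : Matrix (Fin 2) (Fin 2) k := Matrix.single 0 0 1 with hE00
  set E11 : Matrix (Fin 2) (Fin 2) k := Matrix.single 1 1 1 with hE11
  set g2 : Matrix (Fin 2) (Fin 2) k := π ^ a • Matrix.single 0 1 1 with hg2
  set g3 : Matrix (Fin 2) (Fin 2) k := π ^ b • Matrix.single 1 0 1 with hg3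
  have hg2mem : g2 ∈ {A : Matrix (Fin 2) (Fin 2) k |
      A 0 0 ∈ pset O π 0 ∧ A 0 1 ∈ pset O π a ∧
      A 1 0 ∈ pset O π b ∧ A 1 1 ∈ pset O π 0} := by
    refine ⟨?_, ?_, ?_, ?_⟩
    · simpa [hg2] using zero_mem_pset (O := O) (π := π) 0
    · simpa [hg2] using zpow_mem_pset (O := O) (π := π) a
    · simpa [hg2] using zero_mem_pset (O := O) (π := π) b
    · simpa [hg2] using zero_mem_pset (O := O) (π := π) 0
  have hg3mem : g3 ∈ {A : Matrix (Fin 2) (Fin 2) k |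
      A 0 0 ∈ pset O π 0 ∧ A 0 1 ∈ pset O π a ∧
      A 1 0 ∈ pset O π b ∧ A 1 1 ∈ pset O π 0} := by
    refine ⟨?_, ?_, ?_, ?_⟩
    · simpa [hg3] using zero_mem_pset (O := O) (π := π) 0
    · simpa [hg3] using zero_mem_pset (O := O) (π := π) a
    · simpa [hg3] using zpow_mem_pset (O := O) (π := π) b
    · simpa [hg3] using zero_mem_pset (O := O) (π := π) 0
  constructor
  · rintro ⟨T, hTset, hT⟩
    have h2 : g2 ∈ T := by rw [← SetLike.mem_coe, hTset]; exact hg2mem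
    have h3 : g3 ∈ T := by rw [← SetLike.mem_coe, hTset]; exact hg3mem
    have h23 : g2 * g3 ∈ T := T.mul_mem h2 h3
    have he : g2 * g3 = π ^ (a + b) • E00 := by
      rw [hg2, hg3, smul_std_mul, zpow_add₀ hne, hE00]
    rw [he, ← SetLike.mem_coe, hTset] at h23
    have h00 := h23.1
    have : π ^ (a + b) ∈ pset O π 0 := by
      simpa [hE00, Matrix.smul_apply] using h00
    exact (zpow_mem_pset_iff hϖ hπ).1 this
  · intro hab
    refine ⟨{
      carrier := {A : Matrix (Fin 2) (Fin 2) k |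
        A 0 0 ∈ pset O π 0 ∧ A 0 1 ∈ pset O π a ∧
        A 1 0 ∈ pset O π b ∧ A 1 1 ∈ pset O π 0}
      mul_mem' := ?_
      one_mem' := ?_
      add_mem' := ?_
      zero_mem' := ?_
      algebraMap_mem' := ?_ }, rfl, ?_, ?_⟩
    · rintro A B ⟨hA00, hA01, hA10, hA11⟩ ⟨hB00, hB01, hB10, hB11⟩
      have hmul : ∀ i j : Fin 2, (A * B) i j = A i 0 * B 0 j + A i 1 * B 1 j := by
        intro i j
        rw [Matrix.mul_apply, Fin.sum_univ_two]
      refine ⟨?_, ?_, ?_, ?_⟩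
      · rw [hmul 0 0]
        refine add_mem_pset ?_ ?_
        · simpa using mul_mem_pset hϖ hπ hA00 hB00
        · exact pset_mono hϖ hπ hab (mul_mem_pset hϖ hπ hA01 hB10)
      · rw [hmul 0 1]
        refine add_mem_pset ?_ ?_
        · simpa using mul_mem_pset hϖ hπ hA00 hB01
        · simpa using mul_mem_pset hϖ hπ hA01 hB11
      · rw [hmul 1 0]
        refine add_mem_pset ?_ ?_
        · simpa using mul_mem_pset hϖ hπ hA10 hB00
        · simpa using mul_mem_pset hϖ hπ hA11 hB10
      · rw [hmul 1 1]
        refine add_mem_pset ?_ ?_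
        · have h := pset_mono hϖ hπ (by omega : (0:ℤ) ≤ b + a)
            (mul_mem_pset hϖ hπ hA10 hB01)
          exact h
        · simpa using mul_mem_pset hϖ hπ hA11 hB11
    · refine ⟨⟨1, by simp⟩, ?_, ?_, ⟨1, by simp⟩⟩
      · simpa [Matrix.one_apply] using zero_mem_pset (O := O) (π := π) a
      · simpa [Matrix.one_apply] using zero_mem_pset (O := O) (π := π) b
    · rintro A B ⟨hA00, hA01, hA10, hA11⟩ ⟨hB00, hB01, hB10, hB11⟩
      exact ⟨add_mem_pset hA00 hB00, add_mem_pset hA01 hB01,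
        add_mem_pset hA10 hB10, add_mem_pset hA11 hB11⟩
    · exact ⟨zero_mem_pset 0, zero_mem_pset a, zero_mem_pset b, zero_mem_pset 0⟩
    · intro r
      refine ⟨?_, ?_, ?_, ?_⟩
      · rw [show (algebraMap O (Matrix (Fin 2) (Fin 2) k) r) 0 0 = algebraMap O k r by
          simp [Matrix.algebraMap_matrix_apply]]
        exact ⟨r, by simp⟩
      · rw [show (algebraMap O (Matrix (Fin 2) (Fin 2) k) r) 0 1 = 0 by
          simp [Matrix.algebraMap_matrix_apply]]
        exact zero_mem_pset a
      · rw [show (algebraMap O (Matrix (Fin 2) (Fin 2) k) r) 1 0 = 0 by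
          simp [Matrix.algebraMap_matrix_apply]]
        exact zero_mem_pset b
      · rw [show (algebraMap O (Matrix (Fin 2) (Fin 2) k) r) 1 1 = algebraMap O k r by
          simp [Matrix.algebraMap_matrix_apply]]
        exact ⟨r, by simp⟩
    · -- FG
      rw [Submodule.fg_def]
      refine ⟨{E00, g2, g3, E11}, ?_, ?_⟩
      · exact (((Set.finite_singleton E11).insert g3).insert g2).insert E00
      · apply le_antisymm
        · rw [Submodule.span_le]
          rintro x (rfl | rfl | rfl | rfl)
          · exact ⟨⟨1, by simp [hE00]⟩, by simpa [hE00] using zero_mem_pset (O := O) (π := π) a,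
              by simpa [hE00] using zero_mem_pset (O := O) (π := π) b,
              by simpa [hE00] using zero_mem_pset (O := O) (π := π) 0⟩
          · exact hg2mem
          · exact hg3mem
          · exact ⟨by simpa [hE11] using zero_mem_pset (O := O) (π := π) 0,
              by simpa [hE11] using zero_mem_pset (O := O) (π := π) a,
              by simpa [hE11] using zero_mem_pset (O := O) (π := π) b, ⟨1, by simp [hE11]⟩⟩
        · rintro A ⟨⟨c00, h00⟩, ⟨c01, h01⟩, ⟨c10, h10⟩, ⟨c11, h11⟩⟩
          have hdec : A = c00 • E00 + c01 • g2 + c10 • g3 + c11 • E11 := by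
            conv_lhs => rw [matrix_decomp A]
            rw [h00, h01, h10, h11, hE00, hE11, hg2, hg3]
            simp only [zpow_zero, mul_one, mul_smul, algebraMap_smul]
          rw [hdec]
          refine add_mem (add_mem (add_mem ?_ ?_) ?_) ?_ <;>
            exact Submodule.smul_mem _ _ (Submodule.subset_span (by simp))
    · -- fullness
      intro A
      obtain ⟨n1, hn1⟩ := exists_scale hϖ hπ (A 0 0) 0
      obtain ⟨n2, hn2⟩ := exists_scale hϖ hπ (A 0 1) a
      obtain ⟨n3, hn3⟩ := exists_scale hϖ hπ (A 1 0) b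
      obtain ⟨n4, hn4⟩ := exists_scale hϖ hπ (A 1 1) 0
      set N := max (max n1 n2) (max n3 n4) with hN
      refine ⟨ϖ ^ N, pow_ne_zero _ hϖ.ne_zero, ?_, ?_, ?_, ?_⟩
      · simpa [Matrix.smul_apply, smul_eq_mul] using hn1 N (by omega)
      · simpa [Matrix.smul_apply, smul_eq_mul] using hn2 N (by omega)
      · simpa [Matrix.smul_apply, smul_eq_mul] using hn3 N (by omega)
      · simpa [Matrix.smul_apply, smul_eq_mul] using hn4 N (by omega)

lemma part3 (hϖ : Irreducible ϖ) (hπ : π = algebraMap O k ϖ) (a b : ℤ) :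
    (fun A => Matrix.diagonal ![(1 : k), π ^ a] * A *
        (Matrix.diagonal ![(1 : k), π ^ a])⁻¹) ''
      {A : Matrix (Fin 2) (Fin 2) k |
        A 0 0 ∈ pset O π 0 ∧ A 0 1 ∈ pset O π a ∧
        A 1 0 ∈ pset O π b ∧ A 1 1 ∈ pset O π 0} =
    {A : Matrix (Fin 2) (Fin 2) k |
        A 0 0 ∈ pset O π 0 ∧ A 0 1 ∈ pset O π 0 ∧
        A 1 0 ∈ pset O π (a + b) ∧ A 1 1 ∈ pset O π 0} := by
  have hne := pi_ne_zero hϖ hπ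
  set D := Matrix.diagonal ![(1:k), π ^ a] with hD
  set Di := Matrix.diagonal ![(1:k), π ^ (-a)] with hDi
  have hv : ∀ i : Fin 2, (![(1:k), π ^ a] i) * (![(1:k), π ^ (-a)] i) = 1 := by
    intro i
    fin_cases i
    · simp
    · show π ^ a * π ^ (-a) = 1
      rw [← zpow_add₀ hne]
      simp
  have hmul : D * Di = 1 := by
    rw [hD, hDi, Matrix.diagonal_mul_diagonal]
    have h1 : (fun i => ![(1:k), π ^ a] i * ![(1:k), π ^ (-a)] i) = fun _ => (1:k) :=
      funext hv
    rw [h1]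
    exact Matrix.diagonal_one
  have hmul' : Di * D = 1 := by
    rw [hD, hDi, Matrix.diagonal_mul_diagonal]
    have h1 : (fun i => ![(1:k), π ^ (-a)] i * ![(1:k), π ^ a] i) = fun _ => (1:k) :=
      funext fun i => by rw [mul_comm]; exact hv i
    rw [h1]
    exact Matrix.diagonal_one
  have hinv : D⁻¹ = Di := Matrix.inv_eq_right_inv hmul
  rw [hinv]
  ext B
  simp only [Set.mem_image, Set.mem_setOf_eq]
  constructor
  · rintro ⟨A, ⟨h00, h01, h10, h11⟩, rfl⟩
    have e : ∀ i j : Fin 2, (D * A * Di) i j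
        = (![(1:k), π ^ a] i) * A i j * (![(1:k), π ^ (-a)] j) := by
      intro i j
      rw [hD, hDi, Matrix.mul_diagonal, Matrix.diagonal_mul]
    refine ⟨?_, ?_, ?_, ?_⟩
    · rw [e 0 0]; simpa using h00
    · rw [e 0 1]
      have h := mul_mem_pset hϖ hπ h01 (zpow_mem_pset (O := O) (π := π) (-a))
      rw [add_neg_cancel] at h
      simpa using h
    · rw [e 1 0]
      have h := mul_mem_pset hϖ hπ (zpow_mem_pset (O := O) (π := π) a) h10
      simpa using h
    · rw [e 1 1]
      have h := mul_mem_pset hϖ hπ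
        (mul_mem_pset hϖ hπ (zpow_mem_pset (O := O) (π := π) a) h11)
        (zpow_mem_pset (O := O) (π := π) (-a))
      have h2 : a + 0 + -a = 0 := by ring
      rw [h2] at h
      simpa using h
  · rintro ⟨h00, h01, h10, h11⟩
    refine ⟨Di * B * D, ?_, ?_⟩
    · have e : ∀ i j : Fin 2, (Di * B * D) i j
          = (![(1:k), π ^ (-a)] i) * B i j * (![(1:k), π ^ a] j) := by
        intro i j
        rw [hD, hDi, Matrix.mul_diagonal, Matrix.diagonal_mul]
      refine ⟨?_, ?_, ?_, ?_⟩
      · rw [e 0 0]; simpa using h00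
      · rw [e 0 1]
        have h := mul_mem_pset hϖ hπ h01 (zpow_mem_pset (O := O) (π := π) a)
        rw [zero_add] at h
        simpa using h
      · rw [e 1 0]
        have h := mul_mem_pset hϖ hπ (zpow_mem_pset (O := O) (π := π) (-a)) h10
        have h2 : -a + (a + b) = b := by ring
        rw [h2] at h
        simpa using h
      · rw [e 1 1]
        have h := mul_mem_pset hϖ hπ
          (mul_mem_pset hϖ hπ (zpow_mem_pset (O := O) (π := π) (-a)) h11)
          (zpow_mem_pset (O := O) (π := π) a)
        have h2 : -a + 0 + a = 0 := by ring
        rw [h2] at h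
        simpa using h
    · show D * (Di * B * D) * Di = B
      simp only [← mul_assoc]
      rw [hmul, one_mul, mul_assoc, hmul, mul_one]

lemma part1 (hϖ : Irreducible ϖ) (hπ : π = algebraMap O k ϖ)
    (S : Subalgebra O (Matrix (Fin 2) (Fin 2) k)) (hS : IsOrder O S)
    (hR : ∀ d : Fin 2 → O, Matrix.diagonal (fun i => algebraMap O k (d i)) ∈ S) :
    ∃ a b : ℤ, a + b ≥ 0 ∧
      (S : Set (Matrix (Fin 2) (Fin 2) k)) =
        {A | A 0 0 ∈ pset O π 0 ∧ A 0 1 ∈ pset O π a ∧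
             A 1 0 ∈ pset O π b ∧ A 1 1 ∈ pset O π 0} := by
  have hne := pi_ne_zero hϖ hπ
  -- the idempotents are in S
  have hE : ∀ i : Fin 2, Matrix.single i i (1:k) ∈ S := by
    intro i
    have heq : Matrix.single i i (1:k)
        = Matrix.diagonal (fun j => algebraMap O k (if j = i then 1 else 0)) := by
      ext a c
      rcases eq_or_ne a c with rfl | hac
      · rw [Matrix.diagonal_apply_eq]
        by_cases hai : a = i
        · subst hai; simp
        · rw [Matrix.single_apply_of_ne (h := by tauto)]
          simp [hai]
      · rw [Matrix.diagonal_apply_ne _ hac,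
          Matrix.single_apply_of_ne (h := by rintro ⟨rfl, rfl⟩; exact hac rfl)]
    rw [heq]
    exact hR _
  -- entry submodules
  let f : Fin 2 → Fin 2 → (k →ₗ[O] Matrix (Fin 2) (Fin 2) k) := fun i j =>
    { toFun := fun x => x • Matrix.single i j 1
      map_add' := fun x y => add_smul x y _
      map_smul' := fun c x => smul_assoc c x _ }
  let I : Fin 2 → Fin 2 → Submodule O k := fun i j =>
    (Subalgebra.toSubmodule S).comap (f i j)
  have hIdef : ∀ (i j : Fin 2) (x : k),
      x ∈ I i j ↔ x • Matrix.single i j (1:k) ∈ S := fun _ _ _ => Iff.rfl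
  have hmemI : ∀ (A : Matrix (Fin 2) (Fin 2) k), A ∈ S → ∀ i j, A i j ∈ I i j := by
    intro A hA i j
    rw [hIdef, ← corner_eq]
    exact S.mul_mem (S.mul_mem (hE i) hA) (hE j)
  have hSiff : ∀ A : Matrix (Fin 2) (Fin 2) k, A ∈ S ↔ ∀ i j, A i j ∈ I i j := by
    intro A
    refine ⟨hmemI A, fun h => ?_⟩
    rw [matrix_decomp A]
    exact S.add_mem (S.add_mem (S.add_mem ((hIdef _ _ _).1 (h 0 0))
      ((hIdef _ _ _).1 (h 0 1))) ((hIdef _ _ _).1 (h 1 0))) ((hIdef _ _ _).1 (h 1 1))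
  -- each I i j is a finitely generated nonzero submodule
  have hfg : ∀ i j, (I i j).FG := by
    intro i j
    let p : Matrix (Fin 2) (Fin 2) k →ₗ[O] k :=
      { toFun := fun A => A i j
        map_add' := fun _ _ => rfl
        map_smul' := fun _ _ => rfl }
    have hIeq : I i j = Submodule.map p (Subalgebra.toSubmodule S) := by
      apply le_antisymm
      · intro x hx
        refine ⟨x • Matrix.single i j (1:k), (hIdef i j x).1 hx, ?_⟩
        show (x • Matrix.single i j (1:k)) i j = x
        simp
      · rintro x ⟨A, hA, rfl⟩
        exact hmemI A hA i j
    rw [hIeq]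
    exact Submodule.FG.map _ hS.1
  have hnebot : ∀ i j, I i j ≠ ⊥ := by
    intro i j
    obtain ⟨c, hc0, hcS⟩ := hS.2 (Matrix.single i j 1)
    refine Submodule.ne_bot_iff _ |>.2 ⟨algebraMap O k c, ?_, ?_⟩
    · exact (hIdef i j _).2 hcS
    · exact (map_ne_zero_iff _ (IsFractionRing.injective O k)).2 hc0
  have hcls : ∀ i j, ∃ ν : ℤ, ((I i j : Submodule O k) : Set k) = pset O π ν :=
    fun i j => fg_submodule_eq_pset hϖ hπ (hfg i j) (hnebot i j)
  choose ν hν using hcls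
  -- multiplicativity
  have hmulI : ∀ (i j l : Fin 2) (x y : k), x ∈ I i j → y ∈ I j l → x * y ∈ I i l := by
    intro i j l x y hx hy
    rw [hIdef] at hx hy ⊢
    rw [← smul_std_mul]
    exact S.mul_mem hx hy
  have hzmem : ∀ i j, π ^ (ν i j) ∈ I i j := by
    intro i j
    rw [← SetLike.mem_coe, hν i j]
    exact zpow_mem_pset _
  have hmem_iff : ∀ (i j : Fin 2) (x : k), x ∈ I i j ↔ x ∈ pset O π (ν i j) := by
    intro i j x
    rw [← SetLike.mem_coe, hν i j]
  -- diagonal exponents vanish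
  have hdiag : ∀ i : Fin 2, ν i i = 0 := by
    intro i
    have h1 : (1 : k) ∈ I i i := by
      rw [hIdef]
      rw [one_smul]
      exact hE i
    have hle : ν i i ≤ 0 := by
      rw [hmem_iff, ← zpow_zero π, zpow_mem_pset_iff hϖ hπ] at h1
      exact h1
    have h2 : π ^ (ν i i) * π ^ (ν i i) ∈ I i i := hmulI i i i _ _ (hzmem i i) (hzmem i i)
    rw [← zpow_add₀ hne, hmem_iff, zpow_mem_pset_iff hϖ hπ] at h2
    omega
  refine ⟨ν 0 1, ν 1 0, ?_, ?_⟩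
  · have h2 : π ^ (ν 0 1) * π ^ (ν 1 0) ∈ I 0 0 := hmulI 0 1 0 _ _ (hzmem 0 1) (hzmem 1 0)
    rw [← zpow_add₀ hne, hmem_iff, hdiag 0, zpow_mem_pset_iff hϖ hπ] at h2
    omega
  · ext A
    simp only [SetLike.mem_coe, Set.mem_setOf_eq]
    rw [hSiff A]
    constructor
    · intro h
      refine ⟨?_, ?_, ?_, ?_⟩
      · have := (hmem_iff 0 0 _).1 (h 0 0); rwa [hdiag 0] at this
      · exact (hmem_iff 0 1 _).1 (h 0 1)
      · exact (hmem_iff 1 0 _).1 (h 1 0)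
      · have := (hmem_iff 1 1 _).1 (h 1 1); rwa [hdiag 1] at this
    · rintro ⟨h00, h01, h10, h11⟩ i j
      fin_cases i <;> fin_cases j
      · show A 0 0 ∈ I 0 0
        rw [hmem_iff, hdiag 0]; exact h00
      · show A 0 1 ∈ I 0 1
        rw [hmem_iff]; exact h01
      · show A 1 0 ∈ I 1 0
        rw [hmem_iff]; exact h10
      · show A 1 1 ∈ I 1 1
        rw [hmem_iff, hdiag 1]; exact h11


end Parts

/-- Hijikata's characterization in the case `n = 2`: an order `S` in `M₂(k)`
containing `diag(O,O)` has the form `(O, p^a; p^b, O)` with `a + b ≥ 0`; such a set is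
an order iff `a + b ≥ 0`, and is conjugate by `diag(1, π^a)` to `(O, O; p^{a+b}, O)`. -/
theorem stmt18 {O : Type*} [CommRing O] [IsDomain O] [IsDiscreteValuationRing O]
{k : Type*} [Field k] [Algebra O k] [IsFractionRing O k]
    (ϖ : O) (hϖ : Irreducible ϖ) (π : k) (hπ : π = algebraMap O k ϖ)
    (S : Subalgebra O (Matrix (Fin 2) (Fin 2) k)) (hS : IsOrder O S)
    (hR : ∀ d : Fin 2 → O,
      Matrix.diagonal (fun i => algebraMap O k (d i)) ∈ S) :
    (∃ a b : ℤ, a + b ≥ 0 ∧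
      (S : Set (Matrix (Fin 2) (Fin 2) k)) =
        {A | A 0 0 ∈ pset O π 0 ∧ A 0 1 ∈ pset O π a ∧
             A 1 0 ∈ pset O π b ∧ A 1 1 ∈ pset O π 0}) ∧
    (∀ a b : ℤ,
      IsOrderSet O {A : Matrix (Fin 2) (Fin 2) k |
          A 0 0 ∈ pset O π 0 ∧ A 0 1 ∈ pset O π a ∧
          A 1 0 ∈ pset O π b ∧ A 1 1 ∈ pset O π 0} ↔ a + b ≥ 0) ∧
    (∀ a b : ℤ,
      (fun A => Matrix.diagonal ![(1 : k), π ^ a] * A *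
          (Matrix.diagonal ![(1 : k), π ^ a])⁻¹) ''
        {A : Matrix (Fin 2) (Fin 2) k |
          A 0 0 ∈ pset O π 0 ∧ A 0 1 ∈ pset O π a ∧
          A 1 0 ∈ pset O π b ∧ A 1 1 ∈ pset O π 0} =
      {A : Matrix (Fin 2) (Fin 2) k |
          A 0 0 ∈ pset O π 0 ∧ A 0 1 ∈ pset O π 0 ∧
          A 1 0 ∈ pset O π (a + b) ∧ A 1 1 ∈ pset O π 0}) :=
  ⟨part1 hϖ hπ S hS hR, fun a b => part2 hϖ hπ a b, fun a b => part3 hϖ hπ a b⟩
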